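/- Let γ>1, C>0, let α : ℕ → ℂ satisfy |α_n| < 1 and |α_n| ≤ C·exp(−n^γ) for all n ≥ 1, and let F be a Jost solution for α. Set ρ_k = √(1−|α_k|²), C_k = ∏_{j=k+1}^∞ ρ_j^{−1} (convergent by the decay assumption), σ = the 2×2 matrix [[0,1],[1,0]], and for z ≠ 0 define ν(z,k) = 2·z^{⌈k/2⌉}·C_k·σ^{k+1}·F(z,k) ∈ ℂ². Then ν satisfies the CMV equations: for every z ∈ ℂ∖{0} and every k ≥ 1, ν(z,k) = T(z,k)·ν(z,k−1). -/

import Mathlib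

open Complex Filter
open scoped ComplexConjugate Topology

noncomputable section

def cmvZeta (n : ℕ) (z : ℂ) : ℂ := if Odd n then z else 1

def enorm2 (v : ℂ × ℂ) : ℝ := Real.sqrt (‖v.1‖ ^ 2 + ‖v.2‖ ^ 2)

def IsJostSolution (α : ℕ → ℂ) (F : ℂ → ℕ → ℂ × ℂ) : Prop :=
  (∀ z : ℂ, ∃ M : ℝ, ∀ k : ℕ, enorm2 (F z k) ≤ M) ∧
  ∀ (z : ℂ) (k : ℕ),
    Summable (fun n : ℕ => ‖α (k + 1 + n) * cmvZeta (k + 1 + n) z * (F z (k + 1 + n)).2‖) ∧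
    Summable (fun n : ℕ => ‖z ^ n * conj (α (k + 1 + n)) * cmvZeta (k + 1) z * (F z (k + 1 + n)).1‖) ∧
    (F z k).1 = 1 - ∑' n : ℕ, α (k + 1 + n) * cmvZeta (k + 1 + n) z * (F z (k + 1 + n)).2 ∧
    (F z k).2 = - ∑' n : ℕ, z ^ n * conj (α (k + 1 + n)) * cmvZeta (k + 1) z * (F z (k + 1 + n)).1

def SuperExpDecay (γ C : ℝ) (α : ℕ → ℂ) : Prop :=
  ∀ n : ℕ, 1 ≤ n → ‖α n‖ ≤ C * Real.exp (-(n : ℝ) ^ γ)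

def MemB0 (γ C Q : ℝ) (α : ℕ → ℂ) : Prop :=
  (∀ k : ℕ, 1 ≤ k → ‖α k‖ < 1) ∧
  SuperExpDecay γ C α ∧
  1 / Q ≤ ∏' j : ℕ, (1 - ‖α (j + 1)‖)

def jostPi (F : ℂ → ℕ → ℂ × ℂ) (z : ℂ) : ℂ := (F z 0).1 - (F z 0).2

def HasZeroOrder (f : ℂ → ℂ) (w : ℂ) (m : ℕ) : Prop :=
  ∃ g : ℂ → ℂ, AnalyticAt ℂ g w ∧ g w ≠ 0 ∧ ∀ᶠ x in 𝓝 w, f x = (x - w) ^ m * g x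

def CMVStep (α : ℕ → ℂ) (z : ℂ) (k : ℕ) (prev cur : ℂ × ℂ) : Prop :=
  if Odd k then
    cur.1 = (α k * prev.1 + z * prev.2) / ((Real.sqrt (1 - ‖α k‖ ^ 2) : ℝ) : ℂ) ∧
    cur.2 = (prev.1 / z + conj (α k) * prev.2) / ((Real.sqrt (1 - ‖α k‖ ^ 2) : ℝ) : ℂ)
  else
    cur.1 = (conj (α k) * prev.1 + prev.2) / ((Real.sqrt (1 - ‖α k‖ ^ 2) : ℝ) : ℂ) ∧
    cur.2 = (prev.1 + α k * prev.2) / ((Real.sqrt (1 - ‖α k‖ ^ 2) : ℝ) : ℂ)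

def nuSeq (α : ℕ → ℂ) (F : ℂ → ℕ → ℂ × ℂ) (z : ℂ) (k : ℕ) : ℂ × ℂ :=
  if Even k then
    ((2 * z ^ ((k + 1) / 2) * ((∏' j : ℕ, (Real.sqrt (1 - ‖α (k + 1 + j)‖ ^ 2))⁻¹ : ℝ) : ℂ)) * (F z k).2,
     (2 * z ^ ((k + 1) / 2) * ((∏' j : ℕ, (Real.sqrt (1 - ‖α (k + 1 + j)‖ ^ 2))⁻¹ : ℝ) : ℂ)) * (F z k).1)
  else
    ((2 * z ^ ((k + 1) / 2) * ((∏' j : ℕ, (Real.sqrt (1 - ‖α (k + 1 + j)‖ ^ 2))⁻¹ : ℝ) : ℂ)) * (F z k).1,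
     (2 * z ^ ((k + 1) / 2) * ((∏' j : ℕ, (Real.sqrt (1 - ‖α (k + 1 + j)‖ ^ 2))⁻¹ : ℝ) : ℂ)) * (F z k).2)

end


lemma jost_rec1 (α : ℕ → ℂ) (F : ℂ → ℕ → ℂ × ℂ) (hF : IsJostSolution α F) (z : ℂ) (k : ℕ) :
    (F z k).1 = (F z (k+1)).1 - α (k+1) * cmvZeta (k+1) z * (F z (k+1)).2 := by
  obtain ⟨hs1, -, h1, -⟩ := hF.2 z k
  obtain ⟨-, -, h1', -⟩ := hF.2 z (k+1)
  have hsum : Summable (fun n : ℕ => α (k + 1 + n) * cmvZeta (k + 1 + n) z * (F z (k + 1 + n)).2) :=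
    Summable.of_norm (by simpa using hs1)
  rw [h1, h1', hsum.tsum_eq_zero_add]
  have : ∑' n : ℕ, α (k + 1 + (n+1)) * cmvZeta (k + 1 + (n+1)) z * (F z (k + 1 + (n+1))).2
      = ∑' n : ℕ, α (k + 1 + 1 + n) * cmvZeta (k + 1 + 1 + n) z * (F z (k + 1 + 1 + n)).2 :=
    tsum_congr fun n => by rw [show k + 1 + (n+1) = k + 1 + 1 + n by omega]
  rw [this]
  ring

lemma jost_rec2 (α : ℕ → ℂ) (F : ℂ → ℕ → ℂ × ℂ) (hF : IsJostSolution α F) (z : ℂ) (hz : z ≠ 0) (k : ℕ) :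
    (F z k).2 = -(conj (α (k+1)) * cmvZeta (k+1) z * (F z (k+1)).1)
      + (z * cmvZeta (k+1) z / cmvZeta (k+2) z) * (F z (k+1)).2 := by
  obtain ⟨-, hs2, -, h2⟩ := hF.2 z k
  obtain ⟨-, -, -, h2'⟩ := hF.2 z (k+1)
  have hζ : cmvZeta (k+2) z ≠ 0 := by
    unfold cmvZeta; split <;> simp [hz]
  have hsum : Summable (fun n : ℕ => z ^ n * conj (α (k + 1 + n)) * cmvZeta (k + 1) z * (F z (k + 1 + n)).1) :=
    Summable.of_norm (by simpa using hs2)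
  rw [h2, h2', hsum.tsum_eq_zero_add]
  have : ∑' n : ℕ, z ^ (n+1) * conj (α (k + 1 + (n+1))) * cmvZeta (k + 1) z * (F z (k + 1 + (n+1))).1
      = (z * cmvZeta (k+1) z / cmvZeta (k+2) z) *
        ∑' n : ℕ, z ^ n * conj (α (k + 1 + 1 + n)) * cmvZeta (k + 1 + 1) z * (F z (k + 1 + 1 + n)).1 := by
    rw [← tsum_mul_left]
    refine tsum_congr fun n => ?_
    rw [show k + 1 + (n+1) = k + 1 + 1 + n by omega]
    field_simp
    ring
  rw [this]
  have hkk : k + 2 = k + 1 + 1 := rfl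
  rw [hkk]
  ring

-- elementary: -log(1-t) ≤ 2t for 0 ≤ t ≤ 1/2
lemma neg_log_le (t : ℝ) (h0 : 0 ≤ t) (h1 : t ≤ 1/2) : -Real.log (1 - t) ≤ 2 * t := by
  have ht : (0:ℝ) < 1 - t := by linarith
  rw [neg_le, ← Real.log_exp (-(2*t))]
  apply Real.log_le_log (Real.exp_pos _)
  have h := Real.add_one_le_exp (2*t)
  rw [Real.exp_neg]
  rw [inv_le_comm₀ (Real.exp_pos _) ht]
  calc (1-t)⁻¹ ≤ 1 + 2*t := by
        rw [inv_le_iff_one_le_mul₀ ht]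
        nlinarith
    _ ≤ Real.exp (2*t) := by linarith

lemma log_summable (γ C : ℝ) (hγ : 1 < γ) (hC : 0 < C) (α : ℕ → ℂ)
    (hα : SuperExpDecay γ C α) (hα1 : ∀ n : ℕ, 1 ≤ n → ‖α n‖ < 1) :
    Summable (fun n : ℕ => Real.log ((Real.sqrt (1 - ‖α n‖ ^ 2))⁻¹)) := by
  set g : ℕ → ℝ := fun n => Real.log ((Real.sqrt (1 - ‖α n‖ ^ 2))⁻¹) with hg
  -- decay bound with simple exponent
  have hdecay : ∀ n : ℕ, 1 ≤ n → ‖α n‖ ≤ C * Real.exp (-(n:ℝ)) := by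
    intro n hn
    refine (hα n hn).trans ?_
    apply mul_le_mul_of_nonneg_left _ hC.le
    apply Real.exp_le_exp.2
    simp only [neg_le_neg_iff]
    calc (n:ℝ) = (n:ℝ) ^ (1:ℝ) := by rw [Real.rpow_one]
      _ ≤ (n:ℝ) ^ γ := Real.rpow_le_rpow_of_exponent_le (by exact_mod_cast hn) hγ.le
  obtain ⟨N, hN⟩ := exists_nat_ge (Real.log (2*C))
  set M : ℕ := N + 1 with hM
  have hMlog : Real.log (2*C) ≤ (M:ℝ) := by
    rw [hM]; push_cast; linarith
  have hsmall : ∀ n : ℕ, M ≤ n → ‖α n‖ ≤ 1/2 := by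
    intro n hn
    refine (hdecay n (by omega)).trans ?_
    have h1 : Real.exp (-(n:ℝ)) ≤ Real.exp (-(M:ℝ)) := by
      apply Real.exp_le_exp.2; simp; exact_mod_cast hn
    have h2 : Real.exp (-(M:ℝ)) ≤ (2*C)⁻¹ := by
      rw [Real.exp_neg, inv_le_inv₀ (Real.exp_pos _) (by linarith)]
      calc (2*C) = Real.exp (Real.log (2*C)) := (Real.exp_log (by linarith)).symm
        _ ≤ Real.exp (M:ℝ) := Real.exp_le_exp.2 hMlog
    calc C * Real.exp (-(n:ℝ)) ≤ C * (2*C)⁻¹ := by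
          apply mul_le_mul_of_nonneg_left (h1.trans h2) hC.le
      _ = 1/2 := by field_simp
  -- key pointwise bound
  have hbound : ∀ n : ℕ, g (n + M) ≤ (C * Real.exp (-(M:ℝ))) * Real.exp (-1) ^ n := by
    intro n
    set x := ‖α (n + M)‖ with hx
    have hx0 : 0 ≤ x := norm_nonneg _
    have hx2 : x ≤ 1/2 := hsmall _ (by omega)
    have hx1 : 1 - x ^ 2 ≥ 3/4 := by nlinarith
    have hpos : (0:ℝ) < 1 - x ^ 2 := by linarith
    have hle1 : 1 - x ^ 2 ≤ 1 := by nlinarith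
    have hsq : 1 - x ^ 2 ≤ Real.sqrt (1 - x ^ 2) := by
      nlinarith [Real.sq_sqrt hpos.le, Real.sqrt_nonneg (1 - x^2)]
    have hstep : g (n + M) ≤ -Real.log (1 - x ^ 2) := by
      rw [hg]
      simp only [← hx]
      rw [Real.log_inv, neg_le_neg_iff]
      apply Real.log_le_log (by positivity) hsq
    have hlog : -Real.log (1 - x ^ 2) ≤ 2 * x ^ 2 := neg_log_le _ (by positivity) (by nlinarith)
    have hfin : 2 * x ^ 2 ≤ x := by nlinarith
    have hxe : x ≤ C * Real.exp (-((n:ℝ) + M)) := by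
      have := hdecay (n + M) (by omega); push_cast at this ⊢; exact this
    calc g (n+M) ≤ x := by linarith
      _ ≤ C * Real.exp (-((n:ℝ) + M)) := hxe
      _ = (C * Real.exp (-(M:ℝ))) * Real.exp (-1) ^ n := by
          rw [← Real.exp_nat_mul, mul_assoc, ← Real.exp_add]
          congr 2
          ring
  have hmaj : Summable (fun n : ℕ => (C * Real.exp (-(M:ℝ))) * Real.exp (-1) ^ n :) :=
    (summable_geometric_of_lt_one (Real.exp_pos _).le (by
      rw [Real.exp_lt_one_iff]; norm_num)).mul_left _
  have hnonneg : ∀ n : ℕ, 0 ≤ g (n + M) := by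
    intro n
    apply Real.log_nonneg
    set x := ‖α (n + M)‖ with hx
    have hx2 : x ≤ 1/2 := hsmall _ (by omega)
    have hx0 : 0 ≤ x := norm_nonneg _
    have h1 : Real.sqrt (1 - x^2) ≤ 1 := Real.sqrt_le_one.2 (by nlinarith)
    have hs0 : (0:ℝ) < Real.sqrt (1 - x^2) := Real.sqrt_pos.2 (by nlinarith)
    exact (one_le_inv₀ hs0).2 h1
  have : Summable (fun n : ℕ => g (n + M)) :=
    Summable.of_nonneg_of_le hnonneg hbound hmaj
  exact (summable_nat_add_iff M).1 this

lemma mult_tail (γ C : ℝ) (hγ : 1 < γ) (hC : 0 < C) (α : ℕ → ℂ)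
    (hα : SuperExpDecay γ C α) (hα1 : ∀ n : ℕ, 1 ≤ n → ‖α n‖ < 1) (k : ℕ) :
    Multipliable (fun j : ℕ => (Real.sqrt (1 - ‖α (k + 1 + j)‖ ^ 2))⁻¹) := by
  have hg := log_summable γ C hγ hC α hα hα1
  apply Real.multipliable_of_summable_log
    (f := fun j => (Real.sqrt (1 - ‖α (k + 1 + j)‖ ^ 2))⁻¹)
    (hfn := ?_) (hf := ?_)
  · intro j
    have h1 := hα1 (k + 1 + j) (by omega)
    have := norm_nonneg (α (k + 1 + j))
    have : (0:ℝ) < 1 - ‖α (k + 1 + j)‖ ^ 2 := by nlinarith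
    positivity
  · have hinj : Function.Injective (fun j : ℕ => k + 1 + j) := fun a b h => by
      simp only [] at h; omega
    exact (hg.comp_injective hinj)

lemma tprod_peel (γ C : ℝ) (hγ : 1 < γ) (hC : 0 < C) (α : ℕ → ℂ)
    (hα : SuperExpDecay γ C α) (hα1 : ∀ n : ℕ, 1 ≤ n → ‖α n‖ < 1) (m : ℕ) :
    (∏' j : ℕ, (Real.sqrt (1 - ‖α (m + 1 + j)‖ ^ 2))⁻¹)
      = (Real.sqrt (1 - ‖α (m + 1)‖ ^ 2))⁻¹ *
        ∏' j : ℕ, (Real.sqrt (1 - ‖α (m + 1 + 1 + j)‖ ^ 2))⁻¹ := by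
  have hmult : Multipliable (fun n : ℕ =>
      (Real.sqrt (1 - ‖α (m + 1 + (n + 1))‖ ^ 2))⁻¹) := by
    have h := mult_tail γ C hγ hC α hα hα1 (m + 1)
    exact h.congr fun n => by rw [show m + 1 + 1 + n = m + 1 + (n+1) by omega]
  rw [tprod_eq_zero_mul'
    (f := fun j : ℕ => (Real.sqrt (1 - ‖α (m + 1 + j)‖ ^ 2))⁻¹) hmult]
  congr 1
  exact tprod_congr fun n => by rw [show m + 1 + (n+1) = m + 1 + 1 + n by omega]



theorem jost_solution_satisfies_cmv (γ C : ℝ) (hγ : 1 < γ) (hC : 0 < C)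
    (α : ℕ → ℂ) (hα : SuperExpDecay γ C α) (hα1 : ∀ n : ℕ, 1 ≤ n → ‖α n‖ < 1)
    (F : ℂ → ℕ → ℂ × ℂ) (hF : IsJostSolution α F) :
    ∀ z : ℂ, z ≠ 0 → ∀ k : ℕ, 1 ≤ k →
      CMVStep α z k (nuSeq α F z (k - 1)) (nuSeq α F z k) := by
  intro z hz k hk
  obtain ⟨m, rfl⟩ : ∃ m, k = m + 1 := ⟨k - 1, by omega⟩
  have hsub : m + 1 - 1 = m := rfl
  rw [hsub]
  have h1' := hα1 (m+1) (by omega)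
  have h0' := norm_nonneg (α (m+1))
  have hρpos : (0:ℝ) < Real.sqrt (1 - ‖α (m+1)‖ ^ 2) :=
    Real.sqrt_pos.2 (by nlinarith)
  have hρC : ((Real.sqrt (1 - ‖α (m+1)‖ ^ 2) : ℝ) : ℂ) ≠ 0 := by
    exact_mod_cast hρpos.ne'
  have hρ2 : ((Real.sqrt (1 - ‖α (m+1)‖ ^ 2) : ℝ) : ℂ) ^ 2
      = 1 - α (m+1) * conj (α (m+1)) := by
    have hs : (Real.sqrt (1 - ‖α (m+1)‖ ^ 2)) ^ 2
        = 1 - ‖α (m+1)‖ ^ 2 := Real.sq_sqrt (by nlinarith)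
    rw [← Complex.ofReal_pow, hs, Complex.mul_conj, Complex.normSq_eq_norm_sq]
    push_cast
    ring
  have hpeel := tprod_peel γ C hγ hC α hα hα1 m
  have hrec1 := jost_rec1 α F hF z m
  have hrec2 := jost_rec2 α F hF z hz m
  rcases Nat.even_or_odd m with hm | hm
  · -- m even, so k = m+1 odd
    have hodd : Odd (m+1) := Even.add_one hm
    have hne : ¬ Even (m+1) := Nat.not_even_iff_odd.2 hodd
    have hζ1 : cmvZeta (m+1) z = z := if_pos hodd
    have hζ2 : cmvZeta (m+2) z = 1 := by
      have he : Even (m+2) := hm.add (by norm_num)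
      exact if_neg (Nat.not_odd_iff_even.2 he)
    rw [hζ1] at hrec1 hrec2
    rw [hζ2] at hrec2
    have he1 : (m + 1 + 1) / 2 = m / 2 + 1 := by omega
    have he2 : (m + 1) / 2 = m / 2 := by
      have := Nat.even_iff.1 hm; omega
    simp only [CMVStep, nuSeq, if_pos hodd, if_pos hm, if_neg hne, he1, he2]
    rw [hpeel]
    set P : ℝ := ∏' (j : ℕ), (Real.sqrt (1 - ‖α (m + 1 + 1 + j)‖ ^ 2))⁻¹ with hP
    push_cast
    rw [hrec1, hrec2]
    constructor
    · field_simp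
      linear_combination (z ^ (m/2) * z *
        ((P : ℝ) : ℂ) *
        (F z (m+1)).1) * hρ2
    · field_simp
      linear_combination (z ^ (m/2) * z *
        ((P : ℝ) : ℂ) *
        (F z (m+1)).2) * hρ2
  · -- m odd, so k = m+1 even
    have heven : Even (m+1) := Odd.add_one hm
    have hno : ¬ Odd (m+1) := Nat.not_odd_iff_even.2 heven
    have hnem : ¬ Even m := Nat.not_even_iff_odd.2 hm
    have hζ1 : cmvZeta (m+1) z = 1 := if_neg hno
    have hζ2 : cmvZeta (m+2) z = z := by
      have ho : Odd (m+2) := by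
        obtain ⟨t, rfl⟩ := hm; exact ⟨t+1, by ring⟩
      exact if_pos ho
    rw [hζ1] at hrec1 hrec2
    rw [hζ2] at hrec2
    have he1 : (m + 1 + 1) / 2 = (m + 1) / 2 := by
      have := Nat.odd_iff.1 hm; omega
    simp only [CMVStep, nuSeq, if_neg hno, if_pos heven, if_neg hnem, he1]
    rw [hpeel]
    set P : ℝ := ∏' (j : ℕ), (Real.sqrt (1 - ‖α (m + 1 + 1 + j)‖ ^ 2))⁻¹ with hP
    push_cast
    rw [hrec1, hrec2]
    constructor
    · field_simp
      linear_combination (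
        ((P : ℝ) : ℂ) *
        (F z (m+1)).2) * hρ2
    · field_simp
      linear_combination (
        ((P : ℝ) : ℂ) *
        (F z (m+1)).1) * hρ2
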